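/- Let p be a prime, R a commutative ring of characteristic p, σ a finite index type, and i ∈ σ. Write e_i : σ →₀ ℕ for the indicator function of i, so that D_{p·e_i} is the divided-power operator of order p in the variable X_i. Then for all h, f ∈ MvPolynomial σ R one has D_{p·e_i}(h^p * f) = h^p * D_{p·e_i}(f) + (∂_i h)^p * f, where ∂_i denotes the partial derivative with respect to X_i; equivalently, the commutator of D_{p·e_i} with multiplication by h^p is multiplication by (∂_i h)^p. -/

import Mathlib

open MvPolynomial

/-- The divided-power operator `D_n` on `MvPolynomial σ R`, determined on monomials by
`D_n (X ^ m) = (∏ i, Nat.choose (m i) (n i)) • X ^ (m - n)` (componentwise truncated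
subtraction). -/
noncomputable def dpOp (R : Type*) [CommRing R] (σ : Type*) [Fintype σ] (n : σ →₀ ℕ) :
    MvPolynomial σ R →ₗ[R] MvPolynomial σ R :=
  (Finsupp.lsum ℕ fun m : σ →₀ ℕ =>
    (∏ i, Nat.choose (m i) (n i)) • (MvPolynomial.monomial (m - n) : R →ₗ[R] MvPolynomial σ R))
    ∘ₗ (AddMonoidAlgebra.coeffLinearEquiv R).toLinearMap

lemma dpOp_monomial (R : Type*) [CommRing R] (σ : Type*) [Fintype σ] (n m : σ →₀ ℕ) (c : R) :
    dpOp R σ n (monomial m c)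
      = (∏ j, Nat.choose (m j) (n j)) • monomial (m - n) c := by
  rw [dpOp, LinearMap.comp_apply, ← single_eq_monomial]
  erw [Finsupp.lsum_single]
  rfl

lemma dpOp_single_monomial (R : Type*) [CommRing R] (σ : Type*) [Fintype σ] (i : σ) (p : ℕ)
    (m : σ →₀ ℕ) (c : R) :
    dpOp R σ (Finsupp.single i p) (monomial m c)
      = ((m i).choose p) • monomial (m - Finsupp.single i p) c := by
  rw [dpOp_monomial]
  congr 1
  refine Fintype.prod_eq_single i (fun j hj => ?_) |>.trans ?_
  · simp [Finsupp.single_apply, (Ne.symm hj)]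
  · simp

/-- Lucas-type identity in characteristic `p`. -/
lemma choose_cast_lucas (p : ℕ) (hp : p.Prime) (R : Type*) [CommRing R] [CharP R p] (a b : ℕ) :
    (((p * a + b).choose p : ℕ) : R) = (a : R) + ((b.choose p : ℕ) : R) := by
  haveI : Fact p.Prime := ⟨hp⟩
  have h1 : (p * a + b).choose p ≡ (b % p).choose (p % p) * ((p * a + b) / p).choose (p / p)
      [MOD p] := by
    have := Choose.choose_modEq_choose_mod_mul_choose_div_nat (n := p * a + b) (k := p) (p := p)
    simpa [Nat.mul_add_mod] using this
  have h2 : b.choose p ≡ (b % p).choose (p % p) * (b / p).choose (p / p) [MOD p] :=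
    Choose.choose_modEq_choose_mod_mul_choose_div_nat
  rw [Nat.mod_self, Nat.div_self hp.pos, Nat.choose_zero_right, Nat.choose_one_right,
    Nat.mul_add_div hp.pos, one_mul] at h1
  rw [Nat.mod_self, Nat.div_self hp.pos, Nat.choose_zero_right, Nat.choose_one_right,
    one_mul] at h2
  have : (p * a + b).choose p ≡ a + b.choose p [MOD p] :=
    h1.trans (Nat.ModEq.add_left a h2.symm)
  rw [← Nat.cast_add]
  exact CharP.natCast_eq_natCast' R p this

lemma key_monomial (p : ℕ) (hp : p.Prime) (R : Type*) [CommRing R] [CharP R p]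
    (σ : Type*) [Fintype σ] (i : σ) (m k : σ →₀ ℕ) (c d : R) :
    dpOp R σ (Finsupp.single i p) (monomial m c ^ p * monomial k d)
      = monomial m c ^ p * dpOp R σ (Finsupp.single i p) (monomial k d)
        + (pderiv i (monomial m c)) ^ p * monomial k d := by
  haveI : Fact p.Prime := ⟨hp⟩
  rw [pderiv_monomial, monomial_pow, monomial_pow, monomial_mul, dpOp_single_monomial,
    dpOp_single_monomial, smul_monomial, smul_monomial, monomial_mul, monomial_mul]
  have hfrob : ((m i : R)) ^ p = (m i : R) := by
    rw [← frobenius_def]; exact map_natCast (frobenius R p) (m i)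
  have hAi : (p • m + k) i = p * m i + k i := by
    simp [Finsupp.add_apply, Finsupp.smul_apply, smul_eq_mul]
  rw [hAi, mul_pow, hfrob]
  have hlucas : (((p * m i + k i).choose p : ℕ) : R) = (m i : R) + ((k i).choose p : R) :=
    choose_cast_lucas p hp R (m i) (k i)
  rw [nsmul_eq_mul, nsmul_eq_mul, hlucas]
  by_cases hmi : m i = 0
  · have hE : p • m + k - Finsupp.single i p = p • m + (k - Finsupp.single i p) := by
      ext j
      rcases eq_or_ne i j with rfl | hij
      · simp only [Finsupp.tsub_apply, Finsupp.add_apply, Finsupp.smul_apply, smul_eq_mul,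
          Finsupp.single_eq_same, hmi, Nat.mul_zero, Nat.zero_add]
      · simp [Finsupp.single_apply, hij]
    rw [hE, hmi, Nat.cast_zero, zero_add, mul_zero, zero_mul, map_zero, add_zero]
    congr 1
    ring
  · have hsucc := Nat.exists_eq_succ_of_ne_zero hmi
    obtain ⟨a, ha⟩ := hsucc
    have hE2 : p • m + k - Finsupp.single i p = p • (m - Finsupp.single i 1) + k := by
      ext j
      rcases eq_or_ne i j with rfl | hij
      · simp only [Finsupp.tsub_apply, Finsupp.add_apply, Finsupp.smul_apply, smul_eq_mul,
          Finsupp.single_eq_same, ha, Nat.succ_sub_one, Nat.mul_succ]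
        generalize p * a = t
        omega
      · simp [Finsupp.single_apply, hij]
    rw [hE2]
    by_cases hki : p ≤ k i
    · have hE1 : p • m + (k - Finsupp.single i p) = p • (m - Finsupp.single i 1) + k := by
        ext j
        rcases eq_or_ne i j with rfl | hij
        · simp only [Finsupp.tsub_apply, Finsupp.add_apply, Finsupp.smul_apply, smul_eq_mul,
            Finsupp.single_eq_same, ha, Nat.succ_sub_one, Nat.mul_succ]
          generalize p * a = t
          omega
        · simp [Finsupp.single_apply, hij]
      rw [hE1, add_mul, map_add, add_comm]
      congr 1
      · congr 1; ring
      · congr 1; ring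
    · have hC : (k i).choose p = 0 := Nat.choose_eq_zero_of_lt (lt_of_not_ge hki)
      rw [hC, Nat.cast_zero, add_zero, zero_mul, mul_zero, map_zero, zero_add]
      congr 1
      ring

/-- In characteristic `p`, the commutator of `D_(p·e_i)` with multiplication by `h^p` is
multiplication by `(∂_i h)^p`:  `D_(p·e_i) (h^p * f) = h^p * D_(p·e_i) f + (∂_i h)^p * f`. -/
theorem dpOp_p_single_pow_mul (p : ℕ) (hp : p.Prime) (R : Type*) [CommRing R] [CharP R p]
    (σ : Type*) [Fintype σ] (i : σ) (h f : MvPolynomial σ R) :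
    dpOp R σ (p • Finsupp.single i 1) (h ^ p * f)
      = h ^ p * dpOp R σ (p • Finsupp.single i 1) f
        + (MvPolynomial.pderiv i h) ^ p * f := by
  haveI : Fact p.Prime := ⟨hp⟩
  have hn : (p • Finsupp.single i 1 : σ →₀ ℕ) = Finsupp.single i p := by
    rw [Finsupp.smul_single, smul_eq_mul, mul_one]
  rw [hn]
  induction h using MvPolynomial.induction_on' generalizing f with
  | monomial u a =>
    induction f using MvPolynomial.induction_on' with
    | monomial v b => exact key_monomial p hp R σ i u v a b
    | add f g hf hg =>
      rw [mul_add, map_add, map_add, hf, hg]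
      ring
  | add h₁ h₂ ih₁ ih₂ =>
    rw [add_pow_char, add_mul, map_add, ih₁, ih₂, map_add, add_pow_char, add_mul]
    ring
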